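/- If U ∈ SU(4) is a phase carrier up to a global phase, meaning for all θ₀, θ₁ ∈ ℝ there exist φ₀, φ₁ ∈ ℝ and c ∈ {1, -1, i, -i} such that U (Z_{θ₀} ⊗ Z_{θ₁}) = c (Z_{φ₀} ⊗ Z_{φ₁}) U, then U is an exact phase carrier (the equality holds with c = 1 for appropriately chosen φ₀, φ₁), and each row of U has exactly one nonzero entry, so the elementwise absolute value of U is a permutation matrix. -/

import Mathlib

open Complex Matrix Kronecker

noncomputable def Zgate (θ : ℝ) : Matrix (Fin 2) (Fin 2) ℂ :=
  !![exp (θ / 2 * I), 0; 0, exp (-(θ / 2) * I)]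

noncomputable def wgt (a : Fin 2) : ℝ := if a = 0 then 1 else -1

noncomputable def rexp (i : Fin 2 × Fin 2) (θ₀ θ₁ : ℝ) : ℝ :=
  (wgt i.1 * θ₀ + wgt i.2 * θ₁) / 2

noncomputable def ee (i : Fin 2 × Fin 2) (θ₀ θ₁ : ℝ) : ℂ :=
  Complex.exp ((rexp i θ₀ θ₁ : ℝ) * I)

lemma wgt_mem (a : Fin 2) : wgt a = 1 ∨ wgt a = -1 := by
  fin_cases a <;> simp [wgt]

lemma kron_diag (θ₀ θ₁ : ℝ) : Zgate θ₀ ⊗ₖ Zgate θ₁ =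
    Matrix.diagonal (fun i => ee i θ₀ θ₁) := by
  ext ⟨a, b⟩ ⟨c, d⟩
  fin_cases a <;> fin_cases b <;> fin_cases c <;> fin_cases d <;>
    simp [Zgate, ee, rexp, wgt, Matrix.diagonal, Prod.ext_iff, ← Complex.exp_add] <;>
    try (congr 1; ring)

lemma exp_I_inj {x y : ℝ} (hxy : |x - y| < 2 * Real.pi)
    (h : Complex.exp ((x : ℂ) * I) = Complex.exp ((y : ℂ) * I)) : x = y := by
  obtain ⟨n, hn⟩ := Complex.exp_eq_exp_iff_exists_int.mp h
  have h2 : (x : ℂ) = ((y + n * (2 * Real.pi) : ℝ) : ℂ) := by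
    have h1 : (x : ℂ) * I = ((y + n * (2 * Real.pi) : ℝ) : ℂ) * I := by
      push_cast; linear_combination hn
    exact mul_right_cancel₀ Complex.I_ne_zero h1
  have h3 : x = y + n * (2 * Real.pi) := by exact_mod_cast h2
  have hπ : (0 : ℝ) < 2 * Real.pi := by positivity
  have h4 : |(n : ℝ)| * (2 * Real.pi) < 1 * (2 * Real.pi) := by
    have : x - y = n * (2 * Real.pi) := by linarith
    rw [this, abs_mul, abs_of_pos hπ] at hxy; linarith
  have h5 : |(n : ℝ)| < 1 := lt_of_mul_lt_mul_right h4 hπ.le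
  have h6 : (n : ℤ) = 0 := by
    have : ((|n| : ℤ) : ℝ) < 1 := by rw [Int.cast_abs]; exact h5
    have h7 : |n| < 1 := by exact_mod_cast this
    rw [abs_lt] at h7; omega
  rw [h6] at h3; push_cast at h3; linarith

lemma ee_inj21 {j j' : Fin 2 × Fin 2} (h : ee j 2 1 = ee j' 2 1) : j = j' := by
  have hπ : (3:ℝ) < Real.pi := by
    have := Real.pi_gt_d6; linarith
  have hr : rexp j 2 1 = rexp j' 2 1 := by
    refine exp_I_inj ?_ h
    obtain ⟨a, b⟩ := j; obtain ⟨c, d⟩ := j'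
    fin_cases a <;> fin_cases b <;> fin_cases c <;> fin_cases d <;>
      (simp [rexp, wgt]; first | positivity | (rw [abs_lt]; constructor <;> nlinarith))
  obtain ⟨a, b⟩ := j; obtain ⟨c, d⟩ := j'
  fin_cases a <;> fin_cases b <;> fin_cases c <;> fin_cases d <;>
    simp [rexp, wgt] at hr ⊢ <;> norm_num at hr

def fc (i : Fin 2 × Fin 2) : Fin 2 × Fin 2 := (i.1 + 1, i.2 + 1)

lemma wgt_add_one (a : Fin 2) : wgt (a + 1) = - wgt a := by
  fin_cases a <;> simp [wgt]

lemma rexp_fc (i : Fin 2 × Fin 2) (θ₀ θ₁ : ℝ) : rexp (fc i) θ₀ θ₁ = - rexp i θ₀ θ₁ := by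
  simp [rexp, fc, wgt_add_one]; ring

lemma ee_mul_fc (i : Fin 2 × Fin 2) (θ₀ θ₁ : ℝ) : ee i θ₀ θ₁ * ee (fc i) θ₀ θ₁ = 1 := by
  have harg : ((rexp i θ₀ θ₁ : ℝ) : ℂ) * I + ((rexp (fc i) θ₀ θ₁ : ℝ) : ℂ) * I = 0 := by
    rw [rexp_fc]; push_cast; ring
  rw [ee, ee, ← Complex.exp_add, harg, Complex.exp_zero]

lemma ee_mul_ee (p q : Fin 2 × Fin 2) (θ₀ θ₁ : ℝ) :
    ee p θ₀ θ₁ * ee q θ₀ θ₁ =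
      Complex.exp (((rexp p θ₀ θ₁ + rexp q θ₀ θ₁ : ℝ) : ℂ) * I) := by
  rw [ee, ee, ← Complex.exp_add]; congr 1; push_cast; ring

lemma wgt_eq_neg {a b : Fin 2} (h : wgt a = - wgt b) : a = b + 1 := by
  fin_cases a <;> fin_cases b <;> simp_all [wgt] <;> norm_num at h

lemma exp_half_pi : Complex.exp (((Real.pi / 2 : ℝ) : ℂ) * I) = I := by
  rw [Complex.exp_mul_I]
  simp [← Complex.ofReal_cos, ← Complex.ofReal_sin, Real.cos_pi_div_two, Real.sin_pi_div_two]

/-- A two-qubit gate is a phase carrier if `Z` rotations can be carried across it. -/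
def IsPhaseCarrier (U : Matrix (Fin 2 × Fin 2) (Fin 2 × Fin 2) ℂ) : Prop :=
  ∀ θ₀ θ₁ : ℝ, ∃ φ₀ φ₁ : ℝ, U * (Zgate θ₀ ⊗ₖ Zgate θ₁) = (Zgate φ₀ ⊗ₖ Zgate φ₁) * U

theorem phase_carrier_up_to_global_phase (U : Matrix (Fin 2 × Fin 2) (Fin 2 × Fin 2) ℂ)
    (hU : U ∈ Matrix.specialUnitaryGroup (Fin 2 × Fin 2) ℂ)
    (h : ∀ θ₀ θ₁ : ℝ, ∃ φ₀ φ₁ : ℝ, ∃ c : ℂ, c ∈ ({1, -1, I, -I} : Set ℂ) ∧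
      U * (Zgate θ₀ ⊗ₖ Zgate θ₁) = c • ((Zgate φ₀ ⊗ₖ Zgate φ₁) * U)) :
    IsPhaseCarrier U ∧
      (∀ i : Fin 2 × Fin 2, ∃! j : Fin 2 × Fin 2, U i j ≠ 0) ∧
      (∃ π : Equiv.Perm (Fin 2 × Fin 2),
        ∀ i j : Fin 2 × Fin 2, ‖U i j‖ = if i = π j then 1 else 0) := by
  obtain ⟨hUu, hdet⟩ := Matrix.mem_specialUnitaryGroup_iff.mp hU
  have hUU : U * star U = 1 := Matrix.mem_unitaryGroup_iff.mp hUu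
  have h' : ∀ θ₀ θ₁ : ℝ, ∃ φ₀ φ₁ : ℝ, ∃ c : ℂ, c ∈ ({1, -1, I, -I} : Set ℂ) ∧
      ∀ i j, U i j * ee j θ₀ θ₁ = c * (ee i φ₀ φ₁ * U i j) := by
    intro θ₀ θ₁
    obtain ⟨φ₀, φ₁, c, hc, hEq⟩ := h θ₀ θ₁
    refine ⟨φ₀, φ₁, c, hc, fun i j => ?_⟩
    have hij := Matrix.ext_iff.mpr hEq i j
    rw [kron_diag, kron_diag, Matrix.mul_diagonal] at hij
    simpa [Matrix.smul_apply, Matrix.diagonal_mul, smul_eq_mul] using hij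
  have huniq : ∀ i j j', U i j ≠ 0 → U i j' ≠ 0 → j = j' := by
    intro i j j' hj hj'
    obtain ⟨φ₀, φ₁, c, hc, hq⟩ := h' 2 1
    have e1 : ee j 2 1 = c * ee i φ₀ φ₁ :=
      mul_right_cancel₀ hj (by linear_combination hq i j)
    have e2 : ee j' 2 1 = c * ee i φ₀ φ₁ :=
      mul_right_cancel₀ hj' (by linear_combination hq i j')
    exact ee_inj21 (e1.trans e2.symm)
  have hex : ∀ i, ∃ j, U i j ≠ 0 := by
    intro i
    by_contra hcon; push_neg at hcon
    have h1 : (U * star U) i i = (1 : Matrix (Fin 2 × Fin 2) (Fin 2 × Fin 2) ℂ) i i := by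
      rw [hUU]
    simp [Matrix.mul_apply, Matrix.star_apply, hcon, Matrix.one_apply] at h1
  set σ : Fin 2 × Fin 2 → Fin 2 × Fin 2 := fun i => (hex i).choose with hσdef
  have hσ : ∀ i, U i (σ i) ≠ 0 := fun i => (hex i).choose_spec
  have hcol : ∀ i j, j ≠ σ i → U i j = 0 := by
    intro i j hne; by_contra hnz; exact hne (huniq i j (σ i) hnz (hσ i))
  have hinj : Function.Injective σ := by
    intro i i' hii
    by_contra hne
    have h0 : (U * star U) i i' = 0 := by rw [hUU]; exact Matrix.one_apply_ne hne
    rw [Matrix.mul_apply, Finset.sum_eq_single (σ i)] at h0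
    · have h0' : U i (σ i) * star (U i' (σ i)) = 0 := by
        simpa [Matrix.star_apply] using h0
      exact mul_ne_zero (hσ i) (star_ne_zero.mpr (by rw [hii]; exact hσ i')) h0'
    · intro b _ hb; rw [hcol i b hb]; ring
    · intro hmem; exact absurd (Finset.mem_univ _) hmem
  have hbij : Function.Bijective σ := Finite.injective_iff_bijective.mp hinj
  have habs : ∀ i, ‖U i (σ i)‖ = 1 := by
    intro i
    have h1 : (U * star U) i i = 1 := by rw [hUU]; simp [Matrix.one_apply]
    rw [Matrix.mul_apply, Finset.sum_eq_single (σ i)] at h1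
    · have h1' : U i (σ i) * star (U i (σ i)) = 1 := by
        simpa [Matrix.star_apply] using h1
      have h2 : (Complex.normSq (U i (σ i)) : ℂ) = 1 := by
        rw [← Complex.mul_conj]; exact h1'
      have h3 : ‖U i (σ i)‖ ^ 2 = 1 := by
        rw [Complex.sq_norm]; exact_mod_cast h2
      have h4 : 0 ≤ ‖U i (σ i)‖ := norm_nonneg _
      have h5 : (‖U i (σ i)‖ - 1) * (‖U i (σ i)‖ + 1) = 0 := by
        nlinarith
      rcases mul_eq_zero.mp h5 with h6 | h6 <;> linarith
    · intro b _ hb; rw [hcol i b hb]; ring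
    · intro hmem; exact absurd (Finset.mem_univ _) hmem
  have key : ∀ (θ₀ θ₁ : ℝ) i, ∃ c : ℂ, (c ^ 2 = 1 ∨ c ^ 2 = -1) ∧
      ee (σ i) θ₀ θ₁ * ee (σ (fc i)) θ₀ θ₁ = c ^ 2 := by
    intro θ₀ θ₁ i
    obtain ⟨φ₀, φ₁, c, hc, hq⟩ := h' θ₀ θ₁
    have e1 : ee (σ i) θ₀ θ₁ = c * ee i φ₀ φ₁ :=
      mul_right_cancel₀ (hσ i) (by linear_combination hq i (σ i))
    have e2 : ee (σ (fc i)) θ₀ θ₁ = c * ee (fc i) φ₀ φ₁ :=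
      mul_right_cancel₀ (hσ (fc i)) (by linear_combination hq (fc i) (σ (fc i)))
    refine ⟨c, ?_, ?_⟩
    · simp only [Set.mem_insert_iff, Set.mem_singleton_iff] at hc
      rcases hc with rfl | rfl | rfl | rfl
      · left; norm_num
      · left; norm_num
      · right; simp [pow_two, Complex.I_mul_I]
      · right; simp [pow_two, Complex.I_mul_I]
    · rw [e1, e2]; linear_combination c ^ 2 * (ee_mul_fc i φ₀ φ₁)
  have contra : ∀ (θ₀ θ₁ : ℝ) (i : Fin 2 × Fin 2),
      rexp (σ i) θ₀ θ₁ + rexp (σ (fc i)) θ₀ θ₁ = Real.pi / 2 → False := by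
    intro θ₀ θ₁ i hsum
    obtain ⟨c, hc2, hcc⟩ := key θ₀ θ₁ i
    rw [ee_mul_ee, hsum, exp_half_pi] at hcc
    rcases hc2 with h2 | h2 <;> rw [h2] at hcc <;> simp [Complex.ext_iff] at hcc
  have hw1 : ∀ i, wgt (σ (fc i)).1 = - wgt (σ i).1 := by
    intro i
    rcases wgt_mem (σ i).1 with hp | hp <;> rcases wgt_mem (σ (fc i)).1 with hq | hq
    · exfalso; apply contra (Real.pi / 2) 0 i; simp [rexp, hp, hq]; try ring
    · rw [hp, hq]; try norm_num
    · rw [hp, hq]; try norm_num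
    · exfalso; apply contra (-(Real.pi / 2)) 0 i; simp [rexp, hp, hq]; try ring
  have hw2 : ∀ i, wgt (σ (fc i)).2 = - wgt (σ i).2 := by
    intro i
    rcases wgt_mem (σ i).2 with hp | hp <;> rcases wgt_mem (σ (fc i)).2 with hq | hq
    · exfalso; apply contra 0 (Real.pi / 2) i; simp [rexp, hp, hq]; try ring
    · rw [hp, hq]; try norm_num
    · rw [hp, hq]; try norm_num
    · exfalso; apply contra 0 (-(Real.pi / 2)) i; simp [rexp, hp, hq]; try ring
  have hfc : ∀ i, σ (fc i) = fc (σ i) := by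
    intro i
    exact Prod.ext (wgt_eq_neg (hw1 i)) (wgt_eq_neg (hw2 i))
  refine ⟨?_, ?_, ?_⟩
  · intro θ₀ θ₁
    refine ⟨rexp (σ (0, 0)) θ₀ θ₁ + rexp (σ (0, 1)) θ₀ θ₁,
            rexp (σ (0, 0)) θ₀ θ₁ - rexp (σ (0, 1)) θ₀ θ₁, ?_⟩
    rw [kron_diag, kron_diag]
    ext i j
    rw [Matrix.mul_diagonal, Matrix.diagonal_mul]
    by_cases hij : U i j = 0
    · rw [hij]; ring
    · have hj : j = σ i := huniq i j (σ i) hij (hσ i)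
      subst hj
      rw [mul_comm]
      congr 1
      have hre : rexp (σ i) θ₀ θ₁ =
          rexp i (rexp (σ (0, 0)) θ₀ θ₁ + rexp (σ (0, 1)) θ₀ θ₁)
                 (rexp (σ (0, 0)) θ₀ θ₁ - rexp (σ (0, 1)) θ₀ θ₁) := by
        obtain ⟨a, b⟩ := i
        fin_cases a <;> fin_cases b
        · show rexp (σ (0, 0)) θ₀ θ₁ = rexp (0, 0) _ _
          simp [rexp, wgt]; try ring
        · show rexp (σ (0, 1)) θ₀ θ₁ = rexp (0, 1) _ _
          simp [rexp, wgt]; try ring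
        · show rexp (σ (1, 0)) θ₀ θ₁ = rexp (1, 0) _ _
          rw [show ((1, 0) : Fin 2 × Fin 2) = fc (0, 1) from rfl, hfc, rexp_fc]
          simp [rexp, fc, wgt]; try ring
        · show rexp (σ (1, 1)) θ₀ θ₁ = rexp (1, 1) _ _
          rw [show ((1, 1) : Fin 2 × Fin 2) = fc (0, 0) from rfl, hfc, rexp_fc]
          simp [rexp, fc, wgt]; try ring
      rw [ee, ee, hre]
  · intro i
    exact ⟨σ i, hσ i, fun j hj => huniq i j (σ i) hj (hσ i)⟩
  · refine ⟨(Equiv.ofBijective σ hbij).symm, fun i j => ?_⟩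
    by_cases hj : j = σ i
    · subst hj
      rw [if_pos, habs i]
      exact ((Equiv.ofBijective σ hbij).symm_apply_apply i).symm
    · rw [if_neg, hcol i j hj]
      · exact norm_zero
      · intro hi
        apply hj
        rw [hi]
        exact ((Equiv.ofBijective σ hbij).apply_symm_apply j).symm
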